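/- Choice conjunction preserves the static property: if constant games A₁, …, Aₙ are static, then so is A₁ ⊓ … ⊓ Aₙ, where the choice conjunction is the game in which the only legal first move is a ⊥-labeled move i ∈ {1,…,n}, after which the game continues as Aᵢ; the empty run is won by ⊤, and a run ⟨⊥i, Γ⟩ is won by the winner of Γ in Aᵢ. -/

import Mathlib

/-- A run: a finite sequence of labmoves; a labmove is a pair (player, move),
player `true` = ⊤ (machine), `false` = ⊥ (environment). -/
abbrev Run (M : Type*) := List (Bool × M)

/-- Indices (0-based positions) of the `q`-labeled moves of a run. -/
def labelIndices {M : Type*} (Γ : Run M) (q : Bool) : List ℕ :=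
  Γ.zipIdx.filterMap fun x => if x.1.1 = q then some x.2 else none

/-- In `Γ`, the `k`-th `(¬p)`-labeled move occurs strictly earlier (to the
left) than the `n`-th `p`-labeled move (`k`, `n` are 0-based here). -/
def kthPrecedes {M : Type*} (Γ : Run M) (p : Bool) (k n : ℕ) : Prop :=
  ∃ i j, (labelIndices Γ (!p))[k]? = some i ∧ (labelIndices Γ p)[n]? = some j ∧ i < j

/-- `IsDelay p Γ Δ` says that `Δ` is a `p`-delay of `Γ`: (1) same subsequence
of `p`-labeled moves and same subsequence of `(¬p)`-labeled moves; (2) whenever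
the `k`-th `(¬p)`-labeled move precedes the `n`-th `p`-labeled move in `Γ`, the
same holds in `Δ`. -/
def IsDelay {M : Type*} (p : Bool) (Γ Δ : Run M) : Prop :=
  Δ.filter (fun x => x.1 == p) = Γ.filter (fun x => x.1 == p) ∧
  Δ.filter (fun x => x.1 == !p) = Γ.filter (fun x => x.1 == !p) ∧
  ∀ k n, kthPrecedes Γ p k n → kthPrecedes Δ p k n

/-- A constant game: a pair (Lr, Wn) of a set of (legal) runs and a function
assigning to each run a winner (`true` = ⊤, `false` = ⊥). -/
structure ConstGame (M : Type*) where
  Lr : Set (Run M)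
  Wn : Run M → Bool

/-- A constant game is static iff for every player `p` and all runs Γ, Δ such
that Δ is a `p`-delay of Γ: if Γ is won by `p`, then so is Δ. -/
def ConstGame.Static {M : Type*} (A : ConstGame M) : Prop :=
  ∀ (p : Bool) (Γ Δ : Run M), IsDelay p Γ Δ → A.Wn Γ = p → A.Wn Δ = p

/-- `Γ` is a `p`-illegal run of `A`: the last move of the shortest illegal
initial segment of `Γ` is `p`-labeled. -/
def PIllegal {M : Type*} (A : ConstGame M) (p : Bool) (Γ : Run M) : Prop :=
  ∃ (Φ : Run M) (m : M),
    Φ ++ [(p, m)] <+: Γ ∧ Φ ∈ A.Lr ∧ Φ ++ [(p, m)] ∉ A.Lr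

/-- Choice conjunction A₁ ⊓ … ⊓ Aₙ of constant games (indexed by `Fin n`, with
the index moves encoded into the move type by an injection `enc`): the only
legal first move is a ⊥-labeled move `enc i`, after which the game continues as
`A i`; the empty run is won by ⊤; a run ⟨⊥(enc i), Γ⟩ is won by the winner of Γ
in `A i`; any other (illegal) run is lost by the player who made its first
(offending) move. -/
noncomputable def cConj {M : Type*} {n : ℕ} (enc : Fin n → M)
    (A : Fin n → ConstGame M) : ConstGame M where
  Lr := {Γ | Γ = [] ∨ ∃ (i : Fin n) (Δ : Run M), Δ ∈ (A i).Lr ∧ Γ = (false, enc i) :: Δ}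
  Wn := fun Γ =>
    match Γ with
    | [] => true
    | (true, _) :: _ => false
    | (false, m) :: Δ =>
      haveI := Classical.propDecidable (∃ i, enc i = m)
      if h : ∃ i, enc i = m then (A (Classical.choose h)).Wn Δ else true

lemma labelIndices_cons {M : Type*} (b : Bool) (m : M) (Γ : Run M) (q : Bool) :
    labelIndices ((b, m) :: Γ) q
      = (if b = q then [0] else []) ++ (labelIndices Γ q).map (· + 1) := by
  have henum : ((b, m) :: Γ).zipIdx
      = ((b, m), 0) :: Γ.zipIdx.map (Prod.map id (· + 1)) := by
    rw [List.zipIdx_cons']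
  rw [labelIndices, henum, List.filterMap_cons, List.filterMap_map, labelIndices,
    List.map_filterMap]
  have : ((fun (x : (Bool × M) × ℕ) => if x.1.1 = q then some x.2 else none)
        ∘ Prod.map id (· + 1))
      = fun x => Option.map (· + 1) (if x.1.1 = q then some x.2 else none) := by
    funext x
    rcases x with ⟨⟨c, mm⟩, i⟩
    by_cases h : c = q <;> simp [h, Prod.map]
  rw [this]
  by_cases h : b = q <;> simp [h]

lemma labelIndices_length {M : Type*} (Γ : Run M) (q : Bool) :
    (labelIndices Γ q).length = (Γ.filter (fun x => x.1 == q)).length := by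
  induction Γ with
  | nil => rfl
  | cons a Γ ih =>
    rcases a with ⟨b, m⟩
    rw [labelIndices_cons, List.filter_cons]
    by_cases h : b = q <;> simp [h, ih]

lemma kth_cons_same {M : Type*} {p : Bool} (m : M) (Γ : Run M) (k n : ℕ) :
    kthPrecedes ((p, m) :: Γ) p k (n + 1) ↔ kthPrecedes Γ p k n := by
  simp only [kthPrecedes, labelIndices_cons, show (p = !p) = False from by simp,
    show (p = p) = True from by simp, if_true, if_false,
    List.nil_append, List.cons_append, List.getElem?_cons_succ, List.getElem?_map]
  constructor
  · rintro ⟨i, j, hi, hj, hij⟩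
    rw [Option.map_eq_some_iff] at hi hj
    obtain ⟨i', hi', rfl⟩ := hi
    obtain ⟨j', hj', rfl⟩ := hj
    exact ⟨i', j', hi', hj', by omega⟩
  · rintro ⟨i, j, hi, hj, hij⟩
    exact ⟨i + 1, j + 1, by simp [hi], by simp [hj], by omega⟩

lemma kth_cons_other {M : Type*} {p : Bool} (m : M) (Γ : Run M) (k n : ℕ) :
    kthPrecedes ((!p, m) :: Γ) p (k + 1) n ↔ kthPrecedes Γ p k n := by
  simp only [kthPrecedes, labelIndices_cons, show ((!p) = p) = False from by simp,
    show ((!p) = !p) = True from by simp, if_true, if_false,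
    List.nil_append, List.cons_append, List.getElem?_cons_succ, List.getElem?_map]
  constructor
  · rintro ⟨i, j, hi, hj, hij⟩
    rw [Option.map_eq_some_iff] at hi hj
    obtain ⟨i', hi', rfl⟩ := hi
    obtain ⟨j', hj', rfl⟩ := hj
    exact ⟨i', j', hi', hj', by omega⟩
  · rintro ⟨i, j, hi, hj, hij⟩
    exact ⟨i + 1, j + 1, by simp [hi], by simp [hj], by omega⟩

lemma isDelay_tail {M : Type*} {p b : Bool} {m : M} {Γ Δ : Run M}
    (h : IsDelay p ((b, m) :: Γ) ((b, m) :: Δ)) : IsDelay p Γ Δ := by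
  obtain ⟨h1, h2, h3⟩ := h
  rw [List.filter_cons, List.filter_cons] at h1 h2
  by_cases hb : b = p
  · subst hb
    have h1' : Δ.filter (fun x => x.1 == b) = Γ.filter (fun x => x.1 == b) := by
      simpa using h1
    have h2' : Δ.filter (fun x => x.1 == !b) = Γ.filter (fun x => x.1 == !b) := by
      simpa using h2
    refine ⟨h1', h2', fun k n hkn => ?_⟩
    exact (kth_cons_same m Δ k n).mp (h3 k (n + 1) ((kth_cons_same m Γ k n).mpr hkn))
  · have hb' : b = !p := by cases b <;> cases p <;> simp_all
    subst hb'
    have h1' : Δ.filter (fun x => x.1 == p) = Γ.filter (fun x => x.1 == p) := by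
      simpa using h1
    have h2' : Δ.filter (fun x => x.1 == !p) = Γ.filter (fun x => x.1 == !p) := by
      simpa using h2
    refine ⟨h1', h2', fun k n hkn => ?_⟩
    exact (kth_cons_other m Δ k n).mp (h3 (k + 1) n ((kth_cons_other m Γ k n).mpr hkn))

lemma delay_head_not {M : Type*} {p : Bool} {m m' : M} {Γ Δ : Run M}
    (h : IsDelay p ((!p, m) :: Γ) ((p, m') :: Δ)) : False := by
  obtain ⟨h1, h2, h3⟩ := h
  -- Γ has at least one p-labeled move
  have hΓp : 0 < (labelIndices Γ p).length := by
    rw [labelIndices_length]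
    have he : ((!p, m) :: Γ).filter (fun x => x.1 == p) = Γ.filter (fun x => x.1 == p) := by
      rw [List.filter_cons, if_neg (by simp)]
    rw [he] at h1
    rw [← h1, List.filter_cons, if_pos (by simp)]
    simp
  obtain ⟨j0, hj0⟩ : ∃ j0, (labelIndices Γ p)[0]? = some j0 :=
    ⟨_, List.getElem?_eq_getElem hΓp⟩
  have hkΓ : kthPrecedes ((!p, m) :: Γ) p 0 0 := by
    refine ⟨0, j0 + 1, ?_, ?_, by omega⟩
    · simp [labelIndices_cons]
    · rw [labelIndices_cons, if_neg (by simp), List.nil_append, List.getElem?_map, hj0]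
      rfl
  obtain ⟨i, j, hi, hj, hij⟩ := h3 0 0 hkΓ
  rw [labelIndices_cons, if_pos rfl, List.singleton_append, List.getElem?_cons_zero] at hj
  simp at hj
  omega

/-- Choice conjunction preserves the static property: if the constant games
`A 0, …, A (n-1)` are static, then so is their choice conjunction. -/
theorem cConj_static {M : Type*} {n : ℕ} (enc : Fin n → M)
    (henc : Function.Injective enc) (A : Fin n → ConstGame M)
    (hcl : ∀ i, ∀ Γ : Run M, Γ ∈ (A i).Lr ↔ ∀ Φ : Run M, Φ ≠ [] → Φ <+: Γ → Φ ∈ (A i).Lr)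
    (hil : ∀ i (p : Bool) (Γ : Run M), PIllegal (A i) p Γ → (A i).Wn Γ ≠ p)
    (hst : ∀ i, (A i).Static) :
    (cConj enc A).Static := by
  intro p Γ Δ hd hw
  obtain ⟨h1, h2, h3⟩ := hd
  rcases Γ with _ | ⟨⟨b, m⟩, Γ'⟩
  · -- Γ = []
    have hΔ : Δ = [] := by
      simp only [List.filter_nil] at h1 h2
      cases Δ with
      | nil => rfl
      | cons a Δ' =>
        rcases a with ⟨b, m⟩
        cases b <;> cases p <;> simp_all [List.filter_cons]
    subst hΔ
    exact hw
  · cases b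
    · -- Γ head is (false, m)
      cases p
      · -- p = false
        rcases Δ with _ | ⟨⟨b', m'⟩, Δ'⟩
        · rw [List.filter_cons] at h1
          simp at h1
        · cases b'
          · -- Δ head (false, m') : m' = m and recurse
            have hm : m' = m ∧ Δ'.filter (fun x => x.1 == false)
                = Γ'.filter (fun x => x.1 == false) := by
              rw [List.filter_cons, List.filter_cons] at h1
              simpa using h1
            obtain ⟨rfl, -⟩ := hm
            have htail : IsDelay false Γ' Δ' := isDelay_tail ⟨h1, h2, h3⟩
            by_cases hex : ∃ i, enc i = m'
            · have hw' : (A (Classical.choose hex)).Wn Γ' = false := by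
                simpa [cConj, dif_pos hex] using hw
              show (cConj enc A).Wn ((false, m') :: Δ') = false
              simpa [cConj, dif_pos hex] using
                hst (Classical.choose hex) false Γ' Δ' htail hw'
            · exfalso
              simp [cConj, dif_neg hex] at hw
          · -- Δ head (true, m') : Wn Δ = false = p directly
            rfl
      · -- p = true
        rcases Δ with _ | ⟨⟨b', m'⟩, Δ'⟩
        · rw [List.filter_cons] at h2
          simp at h2
        · cases b'
          · -- Δ head (false, m')
            have hm : m' = m ∧ Δ'.filter (fun x => x.1 == !true)
                = Γ'.filter (fun x => x.1 == !true) := by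
              rw [List.filter_cons, List.filter_cons] at h2
              simpa using h2
            obtain ⟨rfl, -⟩ := hm
            have htail : IsDelay true Γ' Δ' := isDelay_tail ⟨h1, h2, h3⟩
            by_cases hex : ∃ i, enc i = m'
            · have hw' : (A (Classical.choose hex)).Wn Γ' = true := by
                simpa [cConj, dif_pos hex] using hw
              show (cConj enc A).Wn ((false, m') :: Δ') = true
              simpa [cConj, dif_pos hex] using
                hst (Classical.choose hex) true Γ' Δ' htail hw'
            · show (cConj enc A).Wn ((false, m') :: Δ') = true
              simp [cConj, dif_neg hex]
          · -- Δ head (true, m') : impossible (Γ head is (¬p)-labeled)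
            have hcontra : IsDelay true ((!true, m) :: Γ') ((true, m') :: Δ') :=
              ⟨h1, h2, h3⟩
            exact (delay_head_not hcontra).elim
    · -- Γ head is (true, m): Wn Γ = false, so p = false
      have hp : p = false := by
        have : (cConj enc A).Wn ((true, m) :: Γ') = false := rfl
        rw [this] at hw
        exact hw.symm
      subst hp
      rcases Δ with _ | ⟨⟨b', m'⟩, Δ'⟩
      · rw [List.filter_cons] at h2
        simp at h2
      · cases b'
        · -- Δ head (false, m') : impossible since Γ head is (¬p)-labeled
          have hcontra : IsDelay false ((!false, m) :: Γ') ((false, m') :: Δ') :=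
            ⟨h1, h2, h3⟩
          exact (delay_head_not hcontra).elim
        · rfl
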